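/- arXiv:0912.1660 — 3 statements merged into one kernel-verified Lean document; each statement's English description precedes it below -/
import Mathlib

section
/- Let f : ℝⁿ → ℝ be differentiable with ∇f Lipschitz with constant λ on a convex set K, ψ : ℝⁿ → ℝ convex, x ∈ K, α > 0, and let x⁺ be the minimizer of Φ(z) = f(x) + ⟨∇f(x), z − x⟩ + α‖z − x‖² + ψ(z). If x⁺ ∈ K and σ ∈ (0,1) with α ≥ λ/(2(1−σ)), then f(x⁺) + ψ(x⁺) ≤ f(x) + ψ(x) − σα‖x⁺ − x‖². -/
open RealInnerProductSpace

theorem stmt_5 {n : ℕ} (f ψ : EuclideanSpace ℝ (Fin n) → ℝ)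
    (g : EuclideanSpace ℝ (Fin n) → EuclideanSpace ℝ (Fin n))
    (hf : ∀ y, HasGradientAt f (g y) y)
    (hψ : ConvexOn ℝ Set.univ ψ)
    (K : Set (EuclideanSpace ℝ (Fin n))) (hK : Convex ℝ K)
    (lam : ℝ) (hlip : ∀ y ∈ K, ∀ z ∈ K, ‖g y - g z‖ ≤ lam * ‖y - z‖)
    (x : EuclideanSpace ℝ (Fin n)) (hx : x ∈ K)
    (α σ : ℝ) (hα : 0 < α) (hσ : σ ∈ Set.Ioo (0:ℝ) 1)
    (xp : EuclideanSpace ℝ (Fin n)) (hxpK : xp ∈ K)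
    (hxp : ∀ z, f x + ⟪g x, xp - x⟫ + α * ‖xp - x‖^2 + ψ xp ≤
                f x + ⟪g x, z - x⟫ + α * ‖z - x‖^2 + ψ z)
    (hαbig : α ≥ lam / (2 * (1 - σ))) :
    f xp + ψ xp ≤ f x + ψ x - σ * α * ‖xp - x‖^2 := by
  set v : EuclideanSpace ℝ (Fin n) := xp - x with hv
  -- curve c t = x + t • v
  have hseg : ∀ t ∈ Set.Icc (0:ℝ) 1, x + t • v ∈ K := by
    intro t ht
    have := hK hx hxpK (by linarith [ht.1, ht.2] : (0:ℝ) ≤ 1 - t) ht.1 (by ring)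
    convert this using 1
    simp only [hv]
    module
  have hF : ∀ t : ℝ, HasDerivAt (fun t : ℝ => f (x + t • v)) ⟪g (x + t • v), v⟫ t := by
    intro t
    have hc : HasDerivAt (fun t : ℝ => x + t • v) v t := by
      simpa using ((hasDerivAt_id t).smul_const v).const_add x
    have hfd : HasFDerivAt f ((InnerProductSpace.toDual ℝ _) (g (x + t • v))) (x + t • v) :=
      (hf (x + t • v))
    have := hfd.comp_hasDerivAt t hc
    simp at this
    exact this
  -- φ t = f(x+t v) - t ⟪g x, v⟫ - lam/2 t^2 ‖v‖^2
  set φ : ℝ → ℝ := fun t => f (x + t • v) - t * ⟪g x, v⟫ - lam / 2 * t ^ 2 * ‖v‖ ^ 2 with hφ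
  have hφd : ∀ t : ℝ, HasDerivAt φ (⟪g (x + t • v), v⟫ - ⟪g x, v⟫ - lam * t * ‖v‖ ^ 2) t := by
    intro t
    have h1 := (hF t).sub ((hasDerivAt_id t).const_mul ⟪g x, v⟫)
    have h2 : HasDerivAt (fun t : ℝ => lam / 2 * t ^ 2 * ‖v‖ ^ 2)
        (lam * t * ‖v‖ ^ 2) t := by
      have := ((hasDerivAt_pow 2 t).const_mul (lam / 2)).mul_const (‖v‖ ^ 2)
      convert this using 1
      · rfl
      · rfl
      ring
    have := h1.sub h2
    convert this using 1
    · rfl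
    · rfl
    · ext s; simp [hφ]; ring
    · ring
  have hmono : φ 1 ≤ φ 0 := by
    have hdiff : ∀ t ∈ Set.Icc (0:ℝ) 1, HasDerivAt φ _ t := fun t _ => hφd t
    have hcont : ContinuousOn φ (Set.Icc 0 1) := fun t _ => ((hφd t).continuousAt).continuousWithinAt
    have hanti : AntitoneOn φ (Set.Icc (0:ℝ) 1) := by
      apply antitoneOn_of_deriv_nonpos (convex_Icc 0 1) hcont
      · intro t ht
        exact ((hφd t).differentiableAt).differentiableWithinAt
      · intro t ht
        rw [interior_Icc] at ht
        rw [(hφd t).deriv]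
        have h1 : ⟪g (x + t • v) - g x, v⟫ ≤ lam * t * ‖v‖ ^ 2 := by
          calc ⟪g (x + t • v) - g x, v⟫ ≤ ‖g (x + t • v) - g x‖ * ‖v‖ :=
                real_inner_le_norm _ _
            _ ≤ (lam * ‖(x + t • v) - x‖) * ‖v‖ := by
                have := hlip _ (hseg t ⟨le_of_lt ht.1, le_of_lt ht.2⟩) x hx
                exact mul_le_mul_of_nonneg_right this (norm_nonneg _)
            _ = lam * t * ‖v‖ ^ 2 := by
                rw [show x + t • v - x = t • v by abel, norm_smul]
                simp [abs_of_pos ht.1]; ring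
        have h2 : ⟪g (x + t • v) - g x, v⟫ = ⟪g (x + t • v), v⟫ - ⟪g x, v⟫ :=
          inner_sub_left _ _ _
        linarith [h1, h2.symm.le, h2.le]
    exact hanti (Set.left_mem_Icc.mpr zero_le_one) (Set.right_mem_Icc.mpr zero_le_one) zero_le_one
  -- unpack φ 1 ≤ φ 0
  have hdesc : f xp ≤ f x + ⟪g x, v⟫ + lam / 2 * ‖v‖ ^ 2 := by
    have e1 : x + (1:ℝ) • v = xp := by simp [hv]
    have e0 : x + (0:ℝ) • v = x := by simp
    simp only [hφ, e1, e0] at hmono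
    nlinarith [hmono]
  -- optimality at z = x
  have hopt : ⟪g x, v⟫ + α * ‖v‖ ^ 2 + ψ xp ≤ ψ x := by
    have := hxp x
    simp only [sub_self, inner_zero_right, norm_zero] at this
    linarith
  have hlam : lam / 2 ≤ (1 - σ) * α := by
    have h2σ : 0 < 2 * (1 - σ) := by have := hσ.2; linarith
    rw [ge_iff_le, div_le_iff₀ h2σ] at hαbig
    nlinarith
  nlinarith [sq_nonneg ‖v‖, hdesc, hopt, hlam]
end

section
/- Let f : ℝⁿ → ℝ be continuously differentiable and ψ : ℝⁿ → ℝ convex and finite everywhere. Suppose sequences (x_k), (α_k) with α_k ∈ [α_min, β] for constants 0 < α_min ≤ β < ∞, such that for each k, 0 ∈ ∇f(x_{k−1}) + 2α_k(x_k − x_{k−1}) + ∂ψ(x_k). If a subsequence x_{k_i} → x̄ with x_{k_i} − x_{k_i − 1} → 0, then 0 ∈ ∇f(x̄) + ∂ψ(x̄). -/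
open RealInnerProductSpace

/-- The convex subdifferential of `ψ` at `x`. -/
def SubdifferentialAt {n : ℕ} (ψ : EuclideanSpace ℝ (Fin n) → ℝ)
    (x : EuclideanSpace ℝ (Fin n)) : Set (EuclideanSpace ℝ (Fin n)) :=
  {p | ∀ y, ψ x + ⟪p, y - x⟫ ≤ ψ y}

theorem stmt_16 {n : ℕ} (f ψ : EuclideanSpace ℝ (Fin n) → ℝ)
    (g : EuclideanSpace ℝ (Fin n) → EuclideanSpace ℝ (Fin n))
    (hf : ∀ y, HasGradientAt f (g y) y) (hg : Continuous g)
    (hψ : ConvexOn ℝ Set.univ ψ)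
    (x : ℕ → EuclideanSpace ℝ (Fin n)) (α : ℕ → ℝ)
    (αmin β : ℝ) (hαmin : 0 < αmin) (hβ : αmin ≤ β)
    (hα : ∀ k, α k ∈ Set.Icc αmin β)
    (hopt : ∀ k, 1 ≤ k →
      -(g (x (k - 1)) + (2 * α k) • (x k - x (k - 1))) ∈ SubdifferentialAt ψ (x k))
    (kseq : ℕ → ℕ) (hkmono : StrictMono kseq) (hk1 : ∀ i, 1 ≤ kseq i)
    (xbar : EuclideanSpace ℝ (Fin n))
    (hconv : Filter.Tendsto (fun i => x (kseq i)) Filter.atTop (nhds xbar))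
    (hdiff : Filter.Tendsto (fun i => x (kseq i) - x (kseq i - 1))
      Filter.atTop (nhds 0)) :
    -g xbar ∈ SubdifferentialAt ψ xbar := by
  intro y
  have hx' : Filter.Tendsto (fun i => x (kseq i - 1)) Filter.atTop (nhds xbar) := by
    have := hconv.sub hdiff
    simpa using this
  have hgc : Filter.Tendsto (fun i => g (x (kseq i - 1))) Filter.atTop (nhds (g xbar)) :=
    (hg.tendsto xbar).comp hx'
  have hscal : Filter.Tendsto (fun i => (2 * α (kseq i)) • (x (kseq i) - x (kseq i - 1)))
      Filter.atTop (nhds 0) := by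
    rw [tendsto_zero_iff_norm_tendsto_zero]
    have hnorm : Filter.Tendsto (fun i => (2 * β) * ‖x (kseq i) - x (kseq i - 1)‖)
        Filter.atTop (nhds 0) := by
      have := (tendsto_zero_iff_norm_tendsto_zero.mp hdiff).const_mul (2 * β)
      simpa using this
    refine squeeze_zero (fun i => norm_nonneg _) (fun i => ?_) hnorm
    rw [norm_smul]
    have hα1 := (hα (kseq i)).1
    have hα2 := (hα (kseq i)).2
    have : |2 * α (kseq i)| = 2 * α (kseq i) := abs_of_pos (by nlinarith)
    rw [Real.norm_eq_abs, this]
    have : (0:ℝ) ≤ ‖x (kseq i) - x (kseq i - 1)‖ := norm_nonneg _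
    nlinarith
  have hp : Filter.Tendsto
      (fun i => -(g (x (kseq i - 1)) + (2 * α (kseq i)) • (x (kseq i) - x (kseq i - 1))))
      Filter.atTop (nhds (-g xbar)) := by
    have := (hgc.add hscal).neg
    simpa using this
  have hψcont : Continuous ψ := by
    rw [← continuousOn_univ]
    exact hψ.continuousOn isOpen_univ
  have hψlim : Filter.Tendsto (fun i => ψ (x (kseq i))) Filter.atTop (nhds (ψ xbar)) :=
    (hψcont.tendsto xbar).comp hconv
  have hinner : Filter.Tendsto
      (fun i => ⟪-(g (x (kseq i - 1)) + (2 * α (kseq i)) • (x (kseq i) - x (kseq i - 1))),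
        y - x (kseq i)⟫) Filter.atTop (nhds ⟪-g xbar, y - xbar⟫) :=
    hp.inner (tendsto_const_nhds.sub hconv)
  refine le_of_tendsto_of_tendsto' (hψlim.add hinner) tendsto_const_nhds (fun i => ?_)
  exact hopt (kseq i) (hk1 i) y
end

section
/- Let f : ℝⁿ → ℝ be differentiable and convex, ψ : ℝⁿ → ℝ convex, φ = f + ψ with minimizer x* and minimum φ*. Let x ∈ ℝⁿ, α ∈ (0, β], λ_f ≥ 0, and let x⁺ minimize Φ(z) = f(x) + ⟨∇f(x), z − x⟩ + α‖z − x‖² + ψ(z). Suppose the descent estimate φ(x⁺) ≤ Φ(x⁺) + (λ_f/2)‖x⁺ − x‖² holds. Then for every λ ∈ [0,1]: φ(x⁺) ≤ (1−λ)φ(x) + λφ* + βλ²‖x − x*‖² + (λ_f/2)‖x⁺ − x‖². -/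
open RealInnerProductSpace

private lemma grad_ineq {n : ℕ} {f : EuclideanSpace ℝ (Fin n) → ℝ}
    {g : EuclideanSpace ℝ (Fin n)} {a b : EuclideanSpace ℝ (Fin n)}
    (hf : HasGradientAt f g a) (hconv : ConvexOn ℝ Set.univ f) :
    f a + ⟪g, b - a⟫ ≤ f b := by
  set h : ℝ → ℝ := fun t => f (a + t • (b - a)) with hh
  have hline : HasDerivAt (fun t : ℝ => a + t • (b - a)) (b - a) 0 := by
    simpa using (hasDerivAt_id (0:ℝ)).smul_const (b - a) |>.const_add a
  have hfd : HasFDerivAt f ((InnerProductSpace.toDual ℝ _) g) a := hf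
  have hcomp : HasDerivAt h ⟪g, b - a⟫ 0 := by
    have hfd' : HasFDerivAt f ((InnerProductSpace.toDual ℝ _) g) (a + (0:ℝ) • (b - a)) := by
      simpa using hfd
    have := hfd'.comp_hasDerivAt 0 hline
    simpa [hh, InnerProductSpace.toDual_apply_apply, Function.comp_def] using this
  have hslope := hasDerivAt_iff_tendsto_slope.mp hcomp
  have hslope' : Filter.Tendsto (slope h 0) (nhdsWithin 0 (Set.Ioi 0)) (nhds ⟪g, b - a⟫) :=
    hslope.mono_left (nhdsWithin_mono _ (fun t ht => ne_of_gt ht))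
  have hbound : ∀ᶠ t in nhdsWithin (0:ℝ) (Set.Ioi 0), slope h 0 t ≤ f b - f a := by
    filter_upwards [Ioc_mem_nhdsGT_of_mem (Set.left_mem_Ico.mpr one_pos)] with t ht
    have ht0 : 0 < t := ht.1
    have ht1 : t ≤ 1 := ht.2
    have hzt : a + t • (b - a) = (1 - t) • a + t • b := by
      module
    have hconv' : h t ≤ (1 - t) * f a + t * f b := by
      rw [hh]
      simp only [hzt]
      exact hconv.2 (Set.mem_univ a) (Set.mem_univ b) (by linarith) (le_of_lt ht0) (by ring)
    have h0 : h 0 = f a := by simp [hh]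
    rw [slope_def_field, sub_zero, div_le_iff₀ ht0]
    nlinarith [hconv', h0]
  have := le_of_tendsto hslope' hbound
  linarith

theorem stmt_17 {n : ℕ} (f ψ : EuclideanSpace ℝ (Fin n) → ℝ)
    (g : EuclideanSpace ℝ (Fin n) → EuclideanSpace ℝ (Fin n))
    (hf : ∀ y, HasGradientAt f (g y) y)
    (hfconv : ConvexOn ℝ Set.univ f) (hψ : ConvexOn ℝ Set.univ ψ)
    (xstar : EuclideanSpace ℝ (Fin n))
    (hmin : ∀ y, f xstar + ψ xstar ≤ f y + ψ y)
    (x : EuclideanSpace ℝ (Fin n)) (α β lamf : ℝ)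
    (hα : 0 < α) (hαβ : α ≤ β) (hlamf : 0 ≤ lamf)
    (xp : EuclideanSpace ℝ (Fin n))
    (hxp : ∀ z, f x + ⟪g x, xp - x⟫ + α * ‖xp - x‖^2 + ψ xp ≤
                f x + ⟪g x, z - x⟫ + α * ‖z - x‖^2 + ψ z)
    (hdescent : f xp + ψ xp ≤
      (f x + ⟪g x, xp - x⟫ + α * ‖xp - x‖^2 + ψ xp) + (lamf / 2) * ‖xp - x‖^2) :
    ∀ lam : ℝ, lam ∈ Set.Icc (0:ℝ) 1 →
      f xp + ψ xp ≤ (1 - lam) * (f x + ψ x) + lam * (f xstar + ψ xstar)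
        + β * lam^2 * ‖x - xstar‖^2 + (lamf / 2) * ‖xp - x‖^2 := by
  intro lam hlam
  obtain ⟨hl0, hl1⟩ := hlam
  set z : EuclideanSpace ℝ (Fin n) := x + lam • (xstar - x) with hz
  have hzx : z - x = lam • (xstar - x) := by rw [hz]; abel
  have hinner : ⟪g x, z - x⟫ = lam * ⟪g x, xstar - x⟫ := by
    rw [hzx, real_inner_smul_right]
  have hnorm : ‖z - x‖^2 = lam^2 * ‖x - xstar‖^2 := by
    rw [hzx, norm_smul, norm_sub_rev]
    simp [mul_pow, sq_abs]
  have hψz : ψ z ≤ (1 - lam) * ψ x + lam * ψ xstar := by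
    have hzcomb : z = (1 - lam) • x + lam • xstar := by rw [hz]; module
    rw [hzcomb]
    exact hψ.2 (Set.mem_univ x) (Set.mem_univ xstar) (by linarith) hl0 (by ring)
  have hgrad : f x + ⟪g x, xstar - x⟫ ≤ f xstar := grad_ineq (hf x) hfconv
  have hkey := hxp z
  rw [hinner, hnorm] at hkey
  have hαβ' : α * (lam^2 * ‖x - xstar‖^2) ≤ β * lam^2 * ‖x - xstar‖^2 := by
    have : 0 ≤ lam^2 * ‖x - xstar‖^2 := by positivity
    nlinarith
  nlinarith [mul_le_mul_of_nonneg_left hgrad hl0]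
end
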